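/- In a resolvable continuous enumerated tree of models, every closed branch b has a resolution: there is a limit ordinal δ and an increasing continuous sequence ⟨b_i : i ≤ δ⟩ of closed bounded branches with b = b_δ (allowing the constant sequence if b itself is bounded). -/

import Mathlib

universe u

open Set

/-- A continuous enumerated tree of models.  The well-ordered type `ι` (with bottom
element `⊥`) plays the role of the ordinal `α` with its enumeration order `≤`; `tle`
is the tree order `⊑`; the models `M i` are represented by their universes, which
are subsets of the universe `Ω` of the ambient model `N`; `kle M₁ M₂` is the
relation `M₁ ≤ₖ M₂` on universes of structures, and `kle A Set.univ` means
`A ≤ₖ N`. -/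
structure CETM (Ω : Type u) (ι : Type u) [LinearOrder ι] [OrderBot ι] [WellFoundedLT ι] where
  /-- the tree (partial) order `⊑` -/
  tle : ι → ι → Prop
  tle_refl : ∀ i, tle i i
  tle_trans : ∀ {i j k}, tle i j → tle j k → tle i k
  tle_antisymm : ∀ {i j}, tle i j → tle j i → i = j
  /-- `0` is the root of the tree -/
  bot_tle : ∀ i, tle ⊥ i
  /-- if `j` is above `i` in the tree then it is enumerated later -/
  le_of_tle : ∀ {i j}, tle i j → i ≤ j
  /-- the set of tree-predecessors of a node is linearly ordered by `⊑`
  (together with well-foundedness of `ι` this makes it well-ordered) -/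
  pred_linear : ∀ {i j k}, tle j i → tle k i → tle j k ∨ tle k j
  /-- the strong substructure relation `≤ₖ` of the ambient weak AEC -/
  kle : Set Ω → Set Ω → Prop
  /-- the universes of the models of the tree -/
  M : ι → Set Ω
  /-- every model of the tree is a `≤ₖ`-substructure of the ambient model `N` -/
  M_le_N : ∀ i, kle (M i) Set.univ
  M_mono : ∀ {i j}, tle i j → kle (M i) (M j)

namespace CETM

variable {Ω ι : Type u} [LinearOrder ι] [OrderBot ι] [WellFoundedLT ι] (T : CETM Ω ι)

/-- `pred⊑(i)`, the set of strict tree-predecessors of `i`. -/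
def spred (i : ι) : Set ι := {k | T.tle k i ∧ k ≠ i}

/-- `u` has a `⊑`-maximum. -/
def HasMax (u : Set ι) : Prop := ∃ m ∈ u, ∀ k ∈ u, T.tle k m

/-- Continuity of the underlying enumerated tree: if `pred(i) = pred(j)` and `pred(i)`
has no maximum, then `i = j`. -/
def TreeContinuous : Prop :=
  ∀ i j, T.spred i = T.spred j → ¬ T.HasMax (T.spred i) → i = j

/-- Continuity for the models: if `pred(i)` is a nonempty set with no maximum and
`⋃_{j ⊏ i} M j ≤ₖ N`, then `M i = ⋃_{j ⊏ i} M j`. -/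
def ModelContinuous : Prop :=
  ∀ i, (T.spred i).Nonempty → ¬ T.HasMax (T.spred i) →
    T.kle (⋃ j ∈ T.spred i, T.M j) Set.univ → T.M i = ⋃ j ∈ T.spred i, T.M j

/-- A branch: a subset of the tree linearly ordered by `⊑` and closed under
`⊑`-predecessors. -/
def IsBranch (b : Set ι) : Prop :=
  (∀ i ∈ b, ∀ j ∈ b, T.tle i j ∨ T.tle j i) ∧ ∀ i ∈ b, T.spred i ⊆ b

/-- `B(u)`: the set of branches contained in `u` that are maximal among branches
contained in `u`. -/
def maxBranches (u : Set ι) : Set (Set ι) :=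
  {b | T.IsBranch b ∧ b ⊆ u ∧ ∀ b', T.IsBranch b' → b ⊆ b' → b' ⊆ u → b' = b}

/-- `u` is closed: it is closed under `⊑`-predecessors and the union of the models
along any nonempty maximal branch of `u` is a `≤ₖ`-substructure of the ambient
model `N`. -/
def Closed (u : Set ι) : Prop :=
  (∀ i ∈ u, T.spred i ⊆ u) ∧
    ∀ b ∈ T.maxBranches u, b.Nonempty → T.kle (⋃ i ∈ b, T.M i) Set.univ

end CETM

namespace CETM

variable {Ω ι : Type u} [LinearOrder ι] [OrderBot ι] [WellFoundedLT ι] (T : CETM Ω ι)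

/-- A branch is bounded if it has a `⊑`-maximum or equals `pred(i)` for some node. -/
def BoundedBranch (b : Set ι) : Prop := T.HasMax b ∨ ∃ i, b = T.spred i

/-- The tree is resolvable: every branch has only finitely many points `i` where
`⋃_{j ⊏ i} M_j` fails to be a `≤ₖ`-substructure of `N`. -/
def Resolvable : Prop :=
  ∀ b : Set ι, T.IsBranch b →
    Set.Finite {i ∈ b | ¬ T.kle (⋃ j ∈ T.spred i, T.M j) Set.univ}

end CETM

namespace CETM

variable {Ω ι : Type u} [LinearOrder ι] [OrderBot ι] [WellFoundedLT ι] (T : CETM Ω ι)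

lemma tle_of_mem_le {b : Set ι} (hb : T.IsBranch b) {x y : ι}
    (hx : x ∈ b) (hy : y ∈ b) (h : x ≤ y) : T.tle x y := by
  rcases hb.1 x hx y hy with h1 | h1
  · exact h1
  · have : y = x := le_antisymm (T.le_of_tle h1) h
    rw [this]
    exact T.tle_refl x

lemma spred_isBranch (x : ι) : T.IsBranch (T.spred x) := by
  constructor
  · intro i hi j hj
    exact T.pred_linear hi.1 hj.1
  · rintro i ⟨hix, hinex⟩ j ⟨hji, hjnei⟩
    refine ⟨T.tle_trans hji hix, fun h => ?_⟩
    subst h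
    exact hjnei (T.tle_antisymm hji hix)

lemma spred_subset_spred {x y : ι} (h : T.tle x y) (hne : x ≠ y) :
    T.spred x ⊆ T.spred y := by
  rintro k ⟨hkx, hknex⟩
  refine ⟨T.tle_trans hkx h, fun hk => ?_⟩
  subst hk
  exact hne (T.tle_antisymm h hkx)

lemma spred_closed (x : ι) (h : T.kle (⋃ j ∈ T.spred x, T.M j) Set.univ) :
    T.Closed (T.spred x) := by
  refine ⟨(T.spred_isBranch x).2, ?_⟩
  rintro b' ⟨hbr', hsub', hmax'⟩ _
  have : T.spred x = b' := hmax' (T.spred x) (T.spred_isBranch x) hsub' subset_rfl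
  rw [← this]
  exact h

lemma const_resolution {b : Set ι} (hb : T.IsBranch b) (hbclosed : T.Closed b)
    (hbd : T.BoundedBranch b) :
    ∃ (δ : Ordinal.{u}) (f : Ordinal.{u} → Set ι), Order.IsSuccLimit δ ∧
      f δ = b ∧
      (∀ i j, i ≤ j → j ≤ δ → f i ⊆ f j) ∧
      (∀ j ≤ δ, Order.IsSuccLimit j → f j = ⋃ i ∈ Set.Iio j, f i) ∧
      (∀ i < δ, T.IsBranch (f i) ∧ T.Closed (f i) ∧ T.BoundedBranch (f i)) := by
  refine ⟨Ordinal.omega0, fun _ => b, Ordinal.isSuccLimit_omega0, rfl,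
    fun _ _ _ _ => subset_rfl, fun j _ hjlim => ?_, fun _ _ => ⟨hb, hbclosed, hbd⟩⟩
  apply Set.Subset.antisymm
  · intro x hx
    exact Set.mem_biUnion (show (0 : Ordinal) ∈ Set.Iio j from hjlim.pos) hx
  · exact Set.iUnion₂_subset fun i _ => subset_rfl

end CETM
/-- In a resolvable continuous enumerated tree of models, every closed
branch `b` has a resolution: a limit ordinal `δ` and an increasing continuous
sequence `⟨b_i : i ≤ δ⟩` of closed bounded branches with `b = b_δ`. -/
theorem closed_branch_resolution {Ω ι : Type u}
    [LinearOrder ι] [OrderBot ι] [WellFoundedLT ι]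
    (T : CETM Ω ι) (htc : T.TreeContinuous) (hmc : T.ModelContinuous)
    (hres : T.Resolvable)
    (b : Set ι) (hb : T.IsBranch b) (hbclosed : T.Closed b) :
    ∃ (δ : Ordinal.{u}) (f : Ordinal.{u} → Set ι), Order.IsSuccLimit δ ∧
      f δ = b ∧
      (∀ i j, i ≤ j → j ≤ δ → f i ⊆ f j) ∧
      (∀ j ≤ δ, Order.IsSuccLimit j → f j = ⋃ i ∈ Set.Iio j, f i) ∧
      (∀ i < δ, T.IsBranch (f i) ∧ T.Closed (f i) ∧ T.BoundedBranch (f i)) := by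
  by_cases hbd : T.BoundedBranch b
  · exact T.const_resolution hb hbclosed hbd
  rcases Set.eq_empty_or_nonempty b with hbe | hbne
  · refine absurd (Or.inr ⟨⊥, ?_⟩) hbd
    rw [hbe]
    ext k
    simp only [CETM.spred, Set.mem_setOf_eq, Set.mem_empty_iff_false, false_iff, not_and,
      not_ne_iff]
    intro h1
    exact le_antisymm (T.le_of_tle h1) bot_le
  have hnomax : ¬ T.HasMax b := fun h => hbd (Or.inl h)
  -- every element of b has a strictly larger element of b
  have hstep : ∀ m ∈ b, ∃ k ∈ b, m < k := by
    intro m hm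
    by_contra h
    push_neg at h
    refine hnomax ⟨m, hm, fun k hk => ?_⟩
    exact T.tle_of_mem_le hb hk hm (h k hk)
  -- the bad set
  have hSfin : Set.Finite {i ∈ b | ¬ T.kle (⋃ j ∈ T.spred i, T.M j) Set.univ} := hres b hb
  set S : Set ι := {i ∈ b | ¬ T.kle (⋃ j ∈ T.spred i, T.M j) Set.univ} with hS
  -- find i₀ ∈ b above all bad points
  obtain ⟨i₀, hi₀b, hi₀⟩ : ∃ i₀ ∈ b, ∀ s ∈ S, s < i₀ := by
    obtain ⟨m, hm, hmax⟩ := (insert hbne.choose S).exists_max_image id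
      (hSfin.insert _) ⟨_, Set.mem_insert _ _⟩
    have hmb : m ∈ b := by
      rcases hm with h | h
      · rw [h]; exact hbne.choose_spec
      · exact h.1
    obtain ⟨i₀, hi₀b, hlt⟩ := hstep m hmb
    exact ⟨i₀, hi₀b, fun s hs =>
      lt_of_le_of_lt (hmax s (Set.mem_insert_iff.mpr (Or.inr hs))) hlt⟩
  -- the tail of b above i₀
  set c : Set ι := {i | i ∈ b ∧ i₀ ≤ i} with hc
  have hcb : ∀ x : ↥c, (x : ι) ∈ b := fun x => x.2.1
  set δ := Ordinal.type ((· < ·) : ↥c → ↥c → Prop) with hδ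
  have htle : ∀ {x y : ι}, x ∈ b → y ∈ b → x ≤ y → T.tle x y :=
    fun hx hy h => T.tle_of_mem_le hb hx hy h
  have hmemsp : ∀ {x y : ι}, x ∈ b → y ∈ b → x < y → x ∈ T.spred y :=
    fun hx hy h => ⟨htle hx hy h.le, ne_of_lt h⟩
  have hsub : ∀ {x y : ι}, x ∈ b → y ∈ b → x < y → T.spred x ⊆ T.spred y :=
    fun hx hy h => T.spred_subset_spred (htle hx hy h.le) (ne_of_lt h)
  have hcoelt : ∀ {o₁ o₂ : {o // o < δ}}, o₁ < o₂ →
      ((Ordinal.enum ((· < ·) : ↥c → ↥c → Prop) o₁ : ↥c) : ι) < ((Ordinal.enum ((· < ·) : ↥c → ↥c → Prop) o₂ : ↥c) : ι) :=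
    fun h => Subtype.coe_lt_coe.mpr ((Ordinal.enum_lt_enum (r := ((· < ·) : ↥c → ↥c → Prop))).mpr h)
  -- δ is a limit ordinal
  have hδlim : Order.IsSuccLimit δ := by
    rw [Ordinal.isSuccLimit_iff, Order.isSuccPrelimit_iff_succ_lt]
    constructor
    · exact Ordinal.type_ne_zero_iff_nonempty.mpr ⟨⟨i₀, hi₀b, le_refl i₀⟩⟩
    · intro a ha
      set x : ↥c := Ordinal.enum ((· < ·) : ↥c → ↥c → Prop) ⟨a, ha⟩ with hx
      obtain ⟨y, hyb, hlt⟩ := hstep (x : ι) (hcb x)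
      have hyc : y ∈ c := ⟨hyb, le_trans x.2.2 hlt.le⟩
      have hxy : x < (⟨y, hyc⟩ : ↥c) := Subtype.coe_lt_coe.mp hlt
      have h1 : a < Ordinal.typein ((· < ·) : ↥c → ↥c → Prop) (⟨y, hyc⟩ : ↥c) := by
        have := (Ordinal.typein_lt_typein ((· < ·) : ↥c → ↥c → Prop)).mpr hxy
        rwa [hx, Ordinal.typein_enum ((· < ·) : ↥c → ↥c → Prop)] at this
      exact lt_of_le_of_lt (Order.succ_le_of_lt h1)
        (Ordinal.typein_lt_type ((· < ·) : ↥c → ↥c → Prop) (⟨y, hyc⟩ : ↥c))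
  -- the resolving sequence
  refine ⟨δ, fun j => if h : j < δ then
      T.spred ((Ordinal.enum ((· < ·) : ↥c → ↥c → Prop) ⟨j, h⟩ : ↥c) : ι) else b, hδlim, dif_neg (lt_irrefl δ),
      ?_, ?_, ?_⟩
  · -- monotone
    dsimp only
    intro i j hij hjδ
    rcases eq_or_lt_of_le hjδ with rfl | hj
    · rw [dif_neg (lt_irrefl δ)]
      rcases eq_or_lt_of_le hij with rfl | hi
      · rw [dif_neg (lt_irrefl δ)]
      · rw [dif_pos hi]
        exact hb.2 _ (hcb _)
    · have hi : i < δ := lt_of_le_of_lt hij hj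
      rw [dif_pos hi, dif_pos hj]
      rcases eq_or_lt_of_le hij with rfl | hij'
      · exact subset_rfl
      · exact hsub (hcb _) (hcb _) (hcoelt (Subtype.mk_lt_mk.mpr hij'))
  · -- continuity at limits
    dsimp only
    intro j hjδ hjlim
    rcases eq_or_lt_of_le hjδ with rfl | hj
    · rw [dif_neg (lt_irrefl δ)]
      apply Set.Subset.antisymm
      · intro k hk
        have hzb : max k i₀ ∈ b := by
          rcases max_cases k i₀ with ⟨h, _⟩ | ⟨h, _⟩ <;> rw [h] <;> assumption
        obtain ⟨y, hyb, hlt⟩ := hstep _ hzb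
        have hyc : y ∈ c := ⟨hyb, le_trans (le_max_right k i₀) hlt.le⟩
        have hky : k < y := lt_of_le_of_lt (le_max_left k i₀) hlt
        set o := Ordinal.typein ((· < ·) : ↥c → ↥c → Prop) (⟨y, hyc⟩ : ↥c) with ho
        have hoδ : o < δ := Ordinal.typein_lt_type _ _
        refine Set.mem_biUnion (Set.mem_Iio.mpr hoδ) ?_
        rw [dif_pos hoδ]
        have hey : (Ordinal.enum ((· < ·) : ↥c → ↥c → Prop) ⟨o, hoδ⟩ : ↥c) = ⟨y, hyc⟩ :=
          Ordinal.enum_typein _ _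
        rw [hey]
        exact hmemsp hk hyb hky
      · refine Set.iUnion₂_subset fun i hi => ?_
        rw [dif_pos (Set.mem_Iio.mp hi)]
        exact hb.2 _ (hcb _)
    · rw [dif_pos hj]
      set x : ↥c := Ordinal.enum ((· < ·) : ↥c → ↥c → Prop) ⟨j, hj⟩ with hx
      apply Set.Subset.antisymm
      · intro k hk
        have hkb : k ∈ b := hb.2 _ (hcb x) hk
        have hkx : k < (x : ι) := lt_of_le_of_ne (T.le_of_tle hk.1) hk.2
        by_cases hki₀ : i₀ ≤ k
        · set K : ↥c := ⟨k, hkb, hki₀⟩ with hK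
          set o := Ordinal.typein ((· < ·) : ↥c → ↥c → Prop) K with ho
          have hoj : o < j := by
            have h1 : K < x := Subtype.coe_lt_coe.mp hkx
            have := (Ordinal.typein_lt_typein ((· < ·) : ↥c → ↥c → Prop)).mpr h1
            rwa [hx, Ordinal.typein_enum ((· < ·) : ↥c → ↥c → Prop)] at this
          have hsoj : Order.succ o < j := hjlim.succ_lt hoj
          have hsoδ : Order.succ o < δ := lt_trans hsoj hj
          refine Set.mem_biUnion (Set.mem_Iio.mpr hsoj) ?_
          rw [dif_pos hsoδ]
          have h2 : ((Ordinal.enum ((· < ·) : ↥c → ↥c → Prop)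
              ⟨o, lt_trans hoj hj⟩ : ↥c) : ι) <
              ((Ordinal.enum ((· < ·) : ↥c → ↥c → Prop) ⟨Order.succ o, hsoδ⟩ : ↥c) : ι) :=
            hcoelt (Subtype.mk_lt_mk.mpr (Order.lt_succ o))
          have heK : (Ordinal.enum ((· < ·) : ↥c → ↥c → Prop) ⟨o, lt_trans hoj hj⟩ : ↥c) = K :=
            Ordinal.enum_typein _ _
          rw [heK] at h2
          exact hmemsp hkb (hcb _) h2
        · have h0δ : (0 : Ordinal) < δ := lt_of_lt_of_le hjlim.pos hj.le
          have h0j : (0 : Ordinal) < j := hjlim.pos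
          refine Set.mem_biUnion (Set.mem_Iio.mpr h0j) ?_
          rw [dif_pos h0δ]
          have hk0 : k < ((Ordinal.enum ((· < ·) : ↥c → ↥c → Prop) ⟨(0 : Ordinal), h0δ⟩ : ↥c) : ι) :=
            lt_of_lt_of_le (lt_of_not_ge hki₀)
              (Ordinal.enum ((· < ·) : ↥c → ↥c → Prop) ⟨(0 : Ordinal), h0δ⟩ : ↥c).2.2
          exact hmemsp hkb (hcb _) hk0
      · refine Set.iUnion₂_subset fun i hi => ?_
        have hij : i < j := Set.mem_Iio.mp hi
        have hiδ : i < δ := lt_trans hij hj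
        rw [dif_pos hiδ]
        exact hsub (hcb _) (hcb _) (hcoelt (Subtype.mk_lt_mk.mpr hij))
  · -- each piece is a closed bounded branch
    dsimp only
    intro i hi
    rw [dif_pos hi]
    set x : ↥c := Ordinal.enum ((· < ·) : ↥c → ↥c → Prop) ⟨i, hi⟩ with hx
    refine ⟨T.spred_isBranch _, T.spred_closed _ ?_, Or.inr ⟨_, rfl⟩⟩
    by_contra hkle
    have : (x : ι) ∈ S := ⟨hcb x, hkle⟩
    exact absurd x.2.2 (not_le.mpr (hi₀ _ this))
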